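/- Let a, w₃, c₃, β, L be real numbers with a ≠ 0 and L > 0. Define the 2×2 complex matrices C⁰ = a·[[1,−1],[−1,1]] and C¹ = −(i w₃ L²/2)·[[1,1],[1,1]] + i β·[[0,1],[−1,0]] − (i w₃ c₃²/(2L²))·[[1,−1],[−1,1]]. Then there exist ω₀ > 0 and functions λ₁, λ₂ : ℝ → ℂ such that for every real ω with |ω| < ω₀, λ₁(ω) and λ₂(ω) are eigenvalues of C⁰ + ω C¹ (i.e. det(C⁰ + ω C¹ − λᵢ(ω)·I) = 0 for i = 1,2), and as ω → 0: λ₁(ω) = −i ω w₃ L² + O(ω²) and λ₂(ω) = 2a − i ω w₃ c₃²/L² + O(ω²). -/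

import Mathlib

open Asymptotics Topology

noncomputable section

/-- The periodic capacitance matrix `C⁰ = a [[1,−1],[−1,1]]` (Lemma 3.5 of the paper). -/
def Cmat0 (a : ℝ) : Matrix (Fin 2) (Fin 2) ℂ := (a : ℂ) • !![1, -1; -1, 1]

/-- The higher-order capacitance matrix
`C¹ = −(i w₃ L²/2)[[1,1],[1,1]] + iβ[[0,1],[−1,0]] − (i w₃ c₃²/(2L²))[[1,−1],[−1,1]]`
(Lemma 3.6(ii) of the paper). -/
def Cmat1 (w3 c3 β L : ℝ) : Matrix (Fin 2) (Fin 2) ℂ :=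
  (-(Complex.I * (w3 : ℂ) * (L : ℂ) ^ 2) / 2) • !![1, 1; 1, 1] +
    (Complex.I * (β : ℂ)) • !![0, 1; -1, 0] +
    (-(Complex.I * (w3 : ℂ) * (c3 : ℂ) ^ 2) / (2 * (L : ℂ) ^ 2)) • !![1, -1; -1, 1]

def tC (w3 L : ℝ) : ℂ := -(Complex.I * w3 * L^2)/2
def uC (w3 c3 L : ℝ) : ℂ := -(Complex.I * w3 * c3^2)/(2*L^2)
def xC (a w3 c3 L : ℝ) (ω : ℝ) : ℂ := -(a:ℂ) + (ω:ℂ)*(tC w3 L - uC w3 c3 L)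
def rC (a w3 c3 β L : ℝ) (ω : ℝ) : ℂ :=
  ((xC a w3 c3 L ω)^2 + (ω:ℂ)^2*(β:ℂ)^2) ^ ((1:ℂ)/2)
def fC (a w3 c3 β L : ℝ) (ω : ℝ) : ℂ :=
  if ‖rC a w3 c3 β L ω + xC a w3 c3 L ω‖ ≤ ‖rC a w3 c3 β L ω - xC a w3 c3 L ω‖
  then rC a w3 c3 β L ω else -(rC a w3 c3 β L ω)

lemma cpow_half_sq (z : ℂ) : (z ^ ((1:ℂ)/2))^2 = z := by
  by_cases h : z = 0
  · simp [h, Complex.zero_cpow (by norm_num : (1:ℂ)/2 ≠ 0)]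
  · rw [sq, ← Complex.cpow_add _ _ h]
    norm_num

lemma rC_sq (a w3 c3 β L : ℝ) (ω : ℝ) :
    (rC a w3 c3 β L ω)^2 = (xC a w3 c3 L ω)^2 + (ω:ℂ)^2*(β:ℂ)^2 :=
  cpow_half_sq _

lemma fC_sq (a w3 c3 β L : ℝ) (ω : ℝ) :
    (fC a w3 c3 β L ω)^2 = (xC a w3 c3 L ω)^2 + (ω:ℂ)^2*(β:ℂ)^2 := by
  unfold fC
  split <;> simp [rC_sq]

lemma min_root_bound (x r f : ℂ) (A : ℝ) (hx : A ≤ ‖x‖)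
    (hf : (f = r ∧ ‖r + x‖ ≤ ‖r - x‖) ∨ (f = -r ∧ ¬ ‖r + x‖ ≤ ‖r - x‖)) :
    ‖f + x‖ * A ≤ ‖r^2 - x^2‖ := by
  have hprod : ‖r + x‖ * ‖r - x‖ = ‖r^2 - x^2‖ := by
    rw [← norm_mul]; ring_nf
  have hsum : 2 * ‖x‖ ≤ ‖r + x‖ + ‖r - x‖ := by
    have h := norm_sub_le (r + x) (r - x)
    rw [show (r + x) - (r - x) = 2*x by ring, norm_mul] at h
    have h2 : ‖(2:ℂ)‖ = 2 := by norm_num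
    rw [h2] at h
    linarith
  rcases hf with ⟨hfr, hle⟩ | ⟨hfr, hle⟩
  · rw [hfr]
    have hA2 : A ≤ ‖r - x‖ := by linarith [norm_nonneg (r + x), norm_nonneg (r - x), hx]
    calc ‖r + x‖ * A ≤ ‖r + x‖ * ‖r - x‖ :=
          mul_le_mul_of_nonneg_left hA2 (norm_nonneg _)
      _ = ‖r^2 - x^2‖ := hprod
  · rw [hfr]
    push_neg at hle
    have hfx : ‖-r + x‖ = ‖r - x‖ := by
      rw [show -r + x = -(r - x) by ring, norm_neg]
    have hA2 : A ≤ ‖r + x‖ := by linarith [norm_nonneg (r + x), norm_nonneg (r - x), hx]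
    calc ‖-r + x‖ * A = ‖r - x‖ * A := by rw [hfx]
      _ ≤ ‖r - x‖ * ‖r + x‖ := mul_le_mul_of_nonneg_left hA2 (norm_nonneg _)
      _ = ‖r^2 - x^2‖ := by rw [← hprod]; ring

lemma fX_bigO (a w3 c3 β L : ℝ) (ha : a ≠ 0) :
    (fun ω : ℝ => fC a w3 c3 β L ω + xC a w3 c3 L ω) =O[𝓝 (0:ℝ)]
      fun ω : ℝ => ω ^ 2 := by
  have ha' : (0:ℝ) < |a| := abs_pos.mpr ha
  set M : ℝ := ‖tC w3 L - uC w3 c3 L‖ with hM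
  have hMnn : (0:ℝ) ≤ M := norm_nonneg _
  have hω₀ : (0:ℝ) < |a| / (2 * (M + 1)) := by positivity
  rw [Asymptotics.isBigO_iff]
  refine ⟨2 * β^2 / |a|, ?_⟩
  have hev : ∀ᶠ ω : ℝ in 𝓝 0, |ω - 0| < |a| / (2 * (M + 1)) :=
    eventually_abs_sub_lt 0 hω₀
  filter_upwards [hev] with ω hω
  rw [sub_zero] at hω
  -- |x| ≥ |a|/2
  have habsx : |a| / 2 ≤ ‖xC a w3 c3 L ω‖ := by
    have h1 : ‖(-(a:ℂ))‖ - ‖(ω:ℂ)*(tC w3 L - uC w3 c3 L)‖ ≤ ‖xC a w3 c3 L ω‖ := by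
      have h := norm_sub_norm_le (-(a:ℂ)) (-((ω:ℂ)*(tC w3 L - uC w3 c3 L)))
      rw [show -(a:ℂ) - -((ω:ℂ)*(tC w3 L - uC w3 c3 L)) = xC a w3 c3 L ω by
        rw [xC]; ring] at h
      simpa using h
    have h2 : ‖(-(a:ℂ))‖ = |a| := by
      rw [norm_neg, Complex.norm_real, Real.norm_eq_abs]
    have h3 : ‖(ω:ℂ)*(tC w3 L - uC w3 c3 L)‖ = |ω| * M := by
      rw [norm_mul, Complex.norm_real, Real.norm_eq_abs, hM]
    have h4 : |ω| * M ≤ |a| / 2 := by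
      have h5 : |ω| * (M + 1) ≤ (|a| / (2 * (M + 1))) * (M + 1) :=
        mul_le_mul_of_nonneg_right (le_of_lt hω) (by positivity)
      have heq : (|a| / (2 * (M + 1))) * (M + 1) = |a| / 2 := by
        field_simp
      nlinarith [abs_nonneg ω]
    rw [h2, h3] at h1
    linarith
  have hkey : ‖fC a w3 c3 β L ω + xC a w3 c3 L ω‖ * (|a| / 2) ≤
      ‖(rC a w3 c3 β L ω)^2 - (xC a w3 c3 L ω)^2‖ := by
    apply min_root_bound _ _ _ _ habsx
    rw [fC]
    split
    · exact Or.inl ⟨by rfl, by assumption⟩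
    · exact Or.inr ⟨by rfl, by assumption⟩
  have hval : ‖(rC a w3 c3 β L ω)^2 - (xC a w3 c3 L ω)^2‖ = ω^2 * β^2 := by
    rw [rC_sq]
    rw [show (xC a w3 c3 L ω)^2 + (ω:ℂ)^2*(β:ℂ)^2 - (xC a w3 c3 L ω)^2
        = ((ω^2*β^2 : ℝ) : ℂ) by push_cast; ring]
    rw [Complex.norm_real, Real.norm_eq_abs, abs_of_nonneg (by positivity)]
  rw [hval] at hkey
  have hnn := norm_nonneg (fC a w3 c3 β L ω + xC a w3 c3 L ω)
  rw [norm_pow, Real.norm_eq_abs]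
  rw [div_mul_eq_mul_div, le_div_iff₀ ha']
  nlinarith [sq_abs ω]

lemma det_eq (a w3 c3 β L : ℝ) (ω lam : ℂ) :
    Matrix.det (Cmat0 a + ω • Cmat1 w3 c3 β L - lam • (1 : Matrix (Fin 2) (Fin 2) ℂ)) =
      ((a:ℂ) + ω*(tC w3 L + uC w3 c3 L) - lam)^2 -
        ((-(a:ℂ) + ω*(tC w3 L - uC w3 c3 L))^2 + ω^2*(β:ℂ)^2) := by
  simp [Cmat0, Cmat1, tC, uC, Matrix.det_fin_two, Matrix.add_apply, Matrix.sub_apply,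
    Matrix.smul_apply, Matrix.one_apply, Complex.I_sq]
  ring_nf
  simp [Complex.I_sq]
  ring

/-- Eigenvalue perturbation expansion for `C⁰ + ω C¹` (key step of Theorem 4.3):
there are eigenvalues `λ₁(ω) = −iω w₃ L² + O(ω²)` and `λ₂(ω) = 2a − iω w₃ c₃²/L² + O(ω²)`. -/
theorem eigenvalue_perturbation (a w3 c3 β L : ℝ) (ha : a ≠ 0) (hL : 0 < L) :
    ∃ ω₀ > (0 : ℝ), ∃ lam1 lam2 : ℝ → ℂ,
      (∀ ω : ℝ, |ω| < ω₀ →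
        Matrix.det (Cmat0 a + (ω : ℂ) • Cmat1 w3 c3 β L -
          lam1 ω • (1 : Matrix (Fin 2) (Fin 2) ℂ)) = 0 ∧
        Matrix.det (Cmat0 a + (ω : ℂ) • Cmat1 w3 c3 β L -
          lam2 ω • (1 : Matrix (Fin 2) (Fin 2) ℂ)) = 0) ∧
      (fun ω : ℝ => lam1 ω - (-Complex.I * (ω : ℂ) * (w3 : ℂ) * (L : ℂ) ^ 2))
        =O[𝓝 (0 : ℝ)] (fun ω : ℝ => ω ^ 2) ∧
      (fun ω : ℝ => lam2 ω -
          ((2 * a : ℝ) - Complex.I * (ω : ℂ) * (w3 : ℂ) * (c3 : ℂ) ^ 2 / (L : ℂ) ^ 2))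
        =O[𝓝 (0 : ℝ)] (fun ω : ℝ => ω ^ 2) := by
  have ha' : (0:ℝ) < |a| := abs_pos.mpr ha
  refine ⟨1, one_pos, ?_⟩
  refine ⟨fun ω => (a:ℂ) + ω*(tC w3 L + uC w3 c3 L) - fC a w3 c3 β L ω,
          fun ω => (a:ℂ) + ω*(tC w3 L + uC w3 c3 L) + fC a w3 c3 β L ω, ?_, ?_, ?_⟩
  · intro ω _
    constructor <;>
    · rw [det_eq]
      have h := fC_sq a w3 c3 β L ω
      rw [xC] at h
      linear_combination h
  · have h1 : (fun ω : ℝ => ((a:ℂ) + ω*(tC w3 L + uC w3 c3 L) - fC a w3 c3 β L ω) -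
        (-Complex.I * (ω : ℂ) * (w3 : ℂ) * (L : ℂ) ^ 2)) =
        fun ω : ℝ => -(fC a w3 c3 β L ω + xC a w3 c3 L ω) := by
      funext ω
      rw [xC, tC, uC]
      ring
    rw [h1]
    exact (fX_bigO a w3 c3 β L ha).neg_left
  · have h2 : (fun ω : ℝ => ((a:ℂ) + ω*(tC w3 L + uC w3 c3 L) + fC a w3 c3 β L ω) -
        ((2 * a : ℝ) - Complex.I * (ω : ℂ) * (w3 : ℂ) * (c3 : ℂ) ^ 2 / (L : ℂ) ^ 2)) =
        fun ω : ℝ => fC a w3 c3 β L ω + xC a w3 c3 L ω := by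
      funext ω
      rw [xC, tC, uC]
      push_cast
      ring
    rw [h2]
    exact fX_bigO a w3 c3 β L ha
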